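/- Let A be an h-skew-adjoint ℂ-linear endomorphism of ℂ^{n+1} and let λ ∈ ℂ with Re(λ) ≠ 0. Then there exist no vectors x, y ∈ ℂ^{n+1} with x ≠ 0, Ax = λ·x and Ay = λ·y + x; i.e. every Jordan block of A for an eigenvalue with nonzero real part has size one. -/
import Mathlib


open Complex

/-- The standard hermitian form of signature `(n,1)` on `ℂ^{n+1}`. -/
noncomputable def hForm (n : ℕ) (x y : Fin (n+1) → ℂ) : ℂ :=
  (∑ i : Fin n, x i.castSucc * (starRingEnd ℂ) (y i.castSucc))
    - x (Fin.last n) * (starRingEnd ℂ) (y (Fin.last n))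

/-- An endomorphism of `ℂ^{n+1}` is `h`-skew-adjoint if
`h(Ax,y) + h(x,Ay) = 0` for all `x, y`. -/
def IsHSkewAdjoint (n : ℕ) (A : (Fin (n+1) → ℂ) →ₗ[ℂ] (Fin (n+1) → ℂ)) : Prop :=
  ∀ x y : Fin (n+1) → ℂ, hForm n (A x) y + hForm n x (A y) = 0

lemma hForm_add_left (n : ℕ) (x x' y : Fin (n+1) → ℂ) :
    hForm n (x + x') y = hForm n x y + hForm n x' y := by
  simp only [hForm, Pi.add_apply, add_mul, Finset.sum_add_distrib]
  ring

lemma hForm_smul_left (n : ℕ) (c : ℂ) (x y : Fin (n+1) → ℂ) :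
    hForm n (c • x) y = c * hForm n x y := by
  simp only [hForm, Pi.smul_apply, smul_eq_mul, Finset.mul_sum, mul_sub]
  congr 1
  · exact Finset.sum_congr rfl fun i _ => by ring
  · ring

lemma hForm_smul_right (n : ℕ) (c : ℂ) (x y : Fin (n+1) → ℂ) :
    hForm n x (c • y) = (starRingEnd ℂ) c * hForm n x y := by
  simp only [hForm, Pi.smul_apply, smul_eq_mul, map_mul, Finset.mul_sum, mul_sub]
  congr 1
  · exact Finset.sum_congr rfl fun i _ => by ring
  · ring

lemma hForm_add_right (n : ℕ) (x y y' : Fin (n+1) → ℂ) :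
    hForm n x (y + y') = hForm n x y + hForm n x y' := by
  simp only [hForm, Pi.add_apply, map_add, mul_add, Finset.sum_add_distrib]
  ring

lemma hForm_self_zero (n : ℕ) (x : Fin (n+1) → ℂ)
    (h0 : hForm n x x = 0) (hlast : x (Fin.last n) = 0) : x = 0 := by
  have h1 : (∑ i : Fin n, (Complex.normSq (x i.castSucc) : ℂ)) = 0 := by
    have := h0
    simp only [hForm, hlast, zero_mul, sub_zero] at this
    rw [← this]
    exact Finset.sum_congr rfl fun i _ => (Complex.mul_conj _).symm
  have h2 : (∑ i : Fin n, Complex.normSq (x i.castSucc)) = 0 := by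
    exact_mod_cast h1
  have h3 : ∀ i ∈ Finset.univ, Complex.normSq (x (Fin.castSucc i)) = 0 := by
    intro i hi
    exact (Finset.sum_eq_zero_iff_of_nonneg fun j _ => Complex.normSq_nonneg _).mp h2 i hi
  funext i
  refine Fin.lastCases ?_ ?_ i
  · exact hlast
  · intro j
    have := h3 j (Finset.mem_univ j)
    exact Complex.normSq_eq_zero.mp this

/-- every Jordan block of an `h`-skew-adjoint endomorphism for
an eigenvalue with nonzero real part has size one: there are no vectors
`x ≠ 0, y` with `Ax = λx` and `Ay = λy + x` when `Re λ ≠ 0`. -/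
theorem no_jordan_block_of_re_ne_zero (n : ℕ) (hn : 1 ≤ n)
    (A : (Fin (n+1) → ℂ) →ₗ[ℂ] (Fin (n+1) → ℂ)) (hA : IsHSkewAdjoint n A)
    (lam : ℂ) (hre : lam.re ≠ 0) :
    ¬ ∃ x y : Fin (n+1) → ℂ, x ≠ 0 ∧ A x = lam • x ∧ A y = lam • y + x := by
  rintro ⟨x, y, hx, hAx, hAy⟩
  set c := lam + (starRingEnd ℂ) lam with hc
  have hcne : c ≠ 0 := by
    rw [hc, Complex.add_conj]
    simp only [ne_eq, Complex.ofReal_eq_zero]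
    intro h
    exact hre (by linarith)
  -- h(x,x) = 0
  have hxx : hForm n x x = 0 := by
    have := hA x x
    rw [hAx, hForm_smul_left, hForm_smul_right] at this
    have hcc : c * hForm n x x = 0 := by rw [hc]; ring_nf; linear_combination this
    exact (mul_eq_zero.mp hcc).resolve_left hcne
  -- h(x,y) = 0
  have hxy : hForm n x y = 0 := by
    have := hA x y
    rw [hAx, hAy, hForm_smul_left, hForm_add_right, hForm_smul_right] at this
    have hcc : c * hForm n x y = 0 := by rw [hc]; linear_combination this - hxx
    exact (mul_eq_zero.mp hcc).resolve_left hcne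
  -- h(y,x) = 0
  have hyx : hForm n y x = 0 := by
    have := hA y x
    rw [hAx, hAy, hForm_add_left, hForm_smul_left, hForm_smul_right] at this
    have hcc : c * hForm n y x = 0 := by rw [hc]; linear_combination this - hxx
    exact (mul_eq_zero.mp hcc).resolve_left hcne
  -- h(y,y) = 0
  have hyy : hForm n y y = 0 := by
    have := hA y y
    rw [hAy, hForm_add_left, hForm_add_right, hForm_smul_left, hForm_smul_right] at this
    have hcc : c * hForm n y y = 0 := by rw [hc]; linear_combination this - hxy - hyx
    exact (mul_eq_zero.mp hcc).resolve_left hcne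
  -- z := y_last • x - x_last • y is isotropic with last coordinate 0
  set a := y (Fin.last n) with ha
  set b := x (Fin.last n) with hb
  set z : Fin (n+1) → ℂ := a • x - b • y with hz
  have hzz : hForm n z z = 0 := by
    simp only [hz, sub_eq_add_neg, ← neg_smul, hForm_add_left, hForm_add_right,
      hForm_smul_left, hForm_smul_right, hxx, hxy, hyx, hyy]
    ring
  have hzlast : z (Fin.last n) = 0 := by
    simp only [hz, Pi.sub_apply, Pi.smul_apply, smul_eq_mul, ← ha, ← hb]
    ring
  have hz0 : z = 0 := hForm_self_zero n z hzz hzlast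
  by_cases hbz : b = 0
  · -- x_last = 0
    by_cases haz : a = 0
    · exact hx (hForm_self_zero n x hxx hbz)
    · have : a • x = 0 := by
        have := hz0
        rw [hz, hbz, zero_smul, sub_zero] at this
        exact this
      exact hx ((smul_eq_zero.mp this).resolve_left haz)
  · -- x_last ≠ 0 : y = (a/b) • x
    have heq : a • x = b • y := by
      have := hz0
      rw [hz, sub_eq_zero] at this
      exact this
    have hy : y = (b⁻¹ * a) • x := by
      have h2 := congrArg (fun v => b⁻¹ • v) heq
      simp only [smul_smul, inv_mul_cancel₀ hbz, one_smul] at h2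
      exact h2.symm
    have hAy2 : A y = lam • y := by
      rw [hy, map_smul, hAx, smul_smul, smul_smul, mul_comm]
    rw [hAy2, left_eq_add] at hAy
    exact hx hAy
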